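/- arXiv:2509.00036 — 2 statements merged into one kernel-verified Lean document; each statement's English description precedes it below -/
import Mathlib

section
/- If X is a Gaussian random vector with X | X₀ ∼ N(ᾱ X₀, σ² I) for constants ᾱ > 0, σ > 0 and X₀ has density p₀, then Tweedie's formula holds: E[X₀ | X = x] = (x + σ² ∇ log p(x)) / ᾱ, where p is the marginal density of X. -/
open MeasureTheory Real

noncomputable section

/-- Isotropic Gaussian density `N(0, c²I)` on `ℝ^d`, evaluated at `y`. -/
def gaussDen (d : ℕ) (c : ℝ) (y : EuclideanSpace ℝ (Fin d)) : ℝ :=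
  (2 * π * c ^ 2) ^ (-(d : ℝ) / 2) * Real.exp (-‖y‖ ^ 2 / (2 * c ^ 2))

/-- Tweedie's formula: if `X | X₀ ∼ N(ᾱ X₀, σ² I)` and `X₀` has density `p₀`, then
`E[X₀ | X = x] = (x + σ² ∇ log p(x)) / ᾱ`, where `p` is the marginal density of `X`
(differentiation under the integral sign being assumed via the hypothesis `hgrad`). -/
theorem stmt5 {d : ℕ} (α σ : ℝ) (hα : 0 < α) (hσ : 0 < σ)
    (p₀ : EuclideanSpace ℝ (Fin d) → ℝ)
    (p : EuclideanSpace ℝ (Fin d) → ℝ)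
    (hp : ∀ x, p x = ∫ x₀, p₀ x₀ * gaussDen d σ (x - α • x₀))
    (hpos : ∀ x, 0 < p x)
    (hint : ∀ x, Integrable (fun x₀ => (p₀ x₀ * gaussDen d σ (x - α • x₀)) • x₀))
    -- differentiation under the integral sign: the gradient of `p` is the
    -- integral of the gradient of the Gaussian kernel
    (hgrad : ∀ x, HasGradientAt p
      (∫ x₀, ((p₀ x₀ * gaussDen d σ (x - α • x₀)) / σ ^ 2) • (α • x₀ - x)) x) :
    ∀ x,
      (p x)⁻¹ • (∫ x₀, (p₀ x₀ * gaussDen d σ (x - α • x₀)) • x₀)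
        = α⁻¹ • (x + (σ ^ 2) • ((p x)⁻¹ • gradient p x)) := by
  intro x
  set w : EuclideanSpace ℝ (Fin d) → ℝ :=
    fun x₀ => p₀ x₀ * gaussDen d σ (x - α • x₀) with hw_def
  have hσ2 : (σ : ℝ) ^ 2 ≠ 0 := pow_ne_zero _ hσ.ne'
  have hp0 : p x ≠ 0 := (hpos x).ne'
  -- w is integrable, since its integral is p x > 0
  have hw : Integrable w := by
    by_contra h
    exact hp0 ((hp x).trans (integral_undef h))
  have hg : gradient p x = ∫ x₀, (w x₀ / σ ^ 2) • (α • x₀ - x) := (hgrad x).gradient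
  set I : EuclideanSpace ℝ (Fin d) := ∫ x₀, (w x₀) • x₀ with hI
  set c : ℝ := ∫ x₀, w x₀ with hc_def
  have hc : c ≠ 0 := by rw [← hp x] at hc_def; rw [hc_def]; exact hp0
  have int1 : Integrable (fun x₀ => (α / σ ^ 2) • ((w x₀) • x₀)) := by
    exact (hint x).smul (α / σ ^ 2)
  have int2 : Integrable (fun x₀ => (σ ^ 2)⁻¹ • ((w x₀) • x)) := by
    exact (hw.smul_const x).smul ((σ ^ 2)⁻¹)
  have hsplit : (∫ x₀, (w x₀ / σ ^ 2) • (α • x₀ - x))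
      = (α / σ ^ 2) • I - (σ ^ 2)⁻¹ • (c • x) := by
    have h1 : ∀ x₀, (w x₀ / σ ^ 2) • (α • x₀ - x)
        = (α / σ ^ 2) • ((w x₀) • x₀) - (σ ^ 2)⁻¹ • ((w x₀) • x) := by
      intro x₀
      rw [smul_sub, smul_smul, smul_smul, smul_smul]
      ring_nf
    simp_rw [h1]
    rw [integral_sub int1 int2, integral_smul, integral_smul, integral_smul_const]
  rw [hg, hsplit, hp x, ← hc_def]
  have hα' : (α : ℝ) ≠ 0 := hα.ne'
  match_scalars
  · field_simp
  · field_simp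
    ring

end
end

section
/- One-step local truncation bound for the exponential integrator: suppose x solves x'(t) = λx(t) + h(t) on [t₀, t₀+Δt] where h is twice continuously differentiable with ‖h''‖ ≤ M on the interval and λ ≥ 0. Then the scheme x̂ = e^{λΔt}x(t₀) + a·h(t₀) + b·h'(t₀) with a = (e^{λΔt}−1)/λ, b = (e^{λΔt}−1−λΔt)/λ² satisfies ‖x(t₀+Δt) − x̂‖ ≤ (M/2)·∫_0^{Δt} e^{λ(Δt−s)} s² ds ≤ (M/2) e^{λΔt} Δt³/3. -/
open Set intervalIntegral

set_option maxHeartbeats 1000000 in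
/-- One-step local truncation bound for the exponential integrator: if
`x' = λx + h` on `[t₀, t₀+Δt]` with `h` twice differentiable and `‖h''‖ ≤ M`, then the
scheme `x̂ = e^{λΔt}x(t₀) + a h(t₀) + b h'(t₀)` with `a = (e^{λΔt}−1)/λ`,
`b = (e^{λΔt}−1−λΔt)/λ²` satisfies
`‖x(t₀+Δt) − x̂‖ ≤ (M/2)∫₀^{Δt} e^{λ(Δt−s)} s² ds ≤ (M/2) e^{λΔt} Δt³/3`. -/
theorem stmt13 {d : ℕ} (lam Δt M t₀ : ℝ) (hlam : 0 < lam) (hΔt : 0 < Δt)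
    (x h h' h'' : ℝ → EuclideanSpace ℝ (Fin d))
    (hx : ∀ t ∈ Icc t₀ (t₀ + Δt), HasDerivAt x (lam • x t + h t) t)
    (hh : ∀ t ∈ Icc t₀ (t₀ + Δt), HasDerivAt h (h' t) t)
    (hh' : ∀ t ∈ Icc t₀ (t₀ + Δt), HasDerivAt h' (h'' t) t)
    (hcont : ContinuousOn h'' (Icc t₀ (t₀ + Δt)))
    (hM : ∀ t ∈ Icc t₀ (t₀ + Δt), ‖h'' t‖ ≤ M) :
    ‖x (t₀ + Δt) -
        (Real.exp (lam * Δt) • x t₀ +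
          ((Real.exp (lam * Δt) - 1) / lam) • h t₀ +
          ((Real.exp (lam * Δt) - 1 - lam * Δt) / lam ^ 2) • h' t₀)‖
      ≤ M / 2 * ∫ s in (0:ℝ)..Δt, Real.exp (lam * (Δt - s)) * s ^ 2 ∧
    M / 2 * (∫ s in (0:ℝ)..Δt, Real.exp (lam * (Δt - s)) * s ^ 2)
      ≤ M / 2 * Real.exp (lam * Δt) * Δt ^ 3 / 3 := by
  have hlam0 : lam ≠ 0 := ne_of_gt hlam
  set T : ℝ := t₀ + Δt with hTdef
  have hle : t₀ ≤ T := by simp only [hTdef]; linarith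
  have hM0 : 0 ≤ M := le_trans (norm_nonneg _) (hM t₀ ⟨le_refl _, hle⟩)
  -- scalar coefficient functions
  set ψ : ℝ → ℝ := fun t => Real.exp (lam * (T - t)) with hψdef
  set a : ℝ → ℝ := fun t => (ψ t - 1) / lam with hadef
  set b : ℝ → ℝ := fun t => (ψ t - 1 - lam * (T - t)) / lam ^ 2 with hbdef
  have hψd : ∀ t : ℝ, HasDerivAt ψ (-lam * ψ t) t := by
    intro t
    have h1 : HasDerivAt (fun t : ℝ => lam * (T - t)) (lam * (-1)) t :=
      ((hasDerivAt_id t).const_sub T).const_mul lam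
    have h2 := h1.exp
    convert h2 using 1
    simp only [hψdef]; ring
  have had : ∀ t : ℝ, HasDerivAt a (-ψ t) t := by
    intro t
    have h2 := ((hψd t).sub_const 1).div_const lam
    refine (h2).congr_deriv ?_
    field_simp
  have hbd : ∀ t : ℝ, HasDerivAt b (-a t) t := by
    intro t
    have h1 : HasDerivAt (fun t : ℝ => lam * (T - t)) (lam * (-1)) t :=
      ((hasDerivAt_id t).const_sub T).const_mul lam
    have h2 := (((hψd t).sub_const 1).sub h1).div_const (lam ^ 2)
    refine (h2).congr_deriv ?_
    simp only [hadef]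
    field_simp
    ring
  have hψcont : Continuous ψ := Real.continuous_exp.comp (by continuity)
  have hbcont : Continuous b := by
    apply Continuous.div_const
    apply Continuous.sub (hψcont.sub continuous_const)
    continuity
  have hb_nonneg : ∀ t, t ≤ T → 0 ≤ b t := by
    intro t ht
    have h1 : lam * (T - t) + 1 ≤ Real.exp (lam * (T - t)) := Real.add_one_le_exp _
    have : (0:ℝ) ≤ ψ t - 1 - lam * (T - t) := by
      simp only [hψdef]; linarith
    exact div_nonneg this (by positivity)
  -- the interpolating function G
  set G : ℝ → EuclideanSpace ℝ (Fin d) :=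
    fun t => ψ t • x t + a t • h t + b t • h' t with hGdef
  have hG : ∀ t ∈ Icc t₀ T, HasDerivAt G (b t • h'' t) t := by
    intro t ht
    have H1 : HasDerivAt (fun t => ψ t • x t)
        (ψ t • (lam • x t + h t) + (-lam * ψ t) • x t) t := (hψd t).smul (hx t ht)
    have H2 : HasDerivAt (fun t => a t • h t)
        (a t • h' t + (-ψ t) • h t) t := (had t).smul (hh t ht)
    have H3 : HasDerivAt (fun t => b t • h' t)
        (b t • h'' t + (-a t) • h' t) t := (hbd t).smul (hh' t ht)
    have Hsum := (H1.add H2).add H3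
    refine (Hsum).congr_deriv ?_
    module
  have hint : IntervalIntegrable (fun t => b t • h'' t) MeasureTheory.volume t₀ T := by
    apply ContinuousOn.intervalIntegrable
    rw [uIcc_of_le hle]
    exact (hbcont.continuousOn).smul hcont
  have hFTC : ∫ t in t₀..T, b t • h'' t = G T - G t₀ :=
    intervalIntegral.integral_eq_sub_of_hasDerivAt
      (fun t ht => hG t (by rwa [uIcc_of_le hle] at ht)) hint
  -- identify G T - G t₀ with the truncation error
  have hψT : ψ T = 1 := by simp [hψdef]
  have haT : a T = 0 := by simp [hadef, hψT]
  have hbT : b T = 0 := by simp [hbdef, hψT]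
  have hψ0 : ψ t₀ = Real.exp (lam * Δt) := by simp [hψdef, hTdef]
  have ha0 : a t₀ = (Real.exp (lam * Δt) - 1) / lam := by simp [hadef, hψ0]
  have hb0 : b t₀ = (Real.exp (lam * Δt) - 1 - lam * Δt) / lam ^ 2 := by
    simp [hbdef, hψ0, hTdef]
  have herr : x T -
      (Real.exp (lam * Δt) • x t₀ + ((Real.exp (lam * Δt) - 1) / lam) • h t₀ +
        ((Real.exp (lam * Δt) - 1 - lam * Δt) / lam ^ 2) • h' t₀)
      = ∫ t in t₀..T, b t • h'' t := by
    rw [hFTC, hGdef]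
    simp only [hψT, haT, hbT, hψ0, ha0, hb0, one_smul, zero_smul, add_zero]
  -- norm bound by M * b
  have hbound : ‖∫ t in t₀..T, b t • h'' t‖ ≤ ∫ t in t₀..T, M * b t := by
    have h1 : ‖∫ t in t₀..T, b t • h'' t‖ ≤ ∫ t in t₀..T, ‖b t • h'' t‖ :=
      intervalIntegral.norm_integral_le_integral_norm hle
    have h2 : (∫ t in t₀..T, ‖b t • h'' t‖) ≤ ∫ t in t₀..T, M * b t := by
      apply intervalIntegral.integral_mono_on hle hint.norm
      · exact (continuous_const.mul hbcont).intervalIntegrable _ _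
      · intro t ht
        rw [norm_smul, Real.norm_eq_abs, abs_of_nonneg (hb_nonneg t ht.2)]
        calc b t * ‖h'' t‖ ≤ b t * M :=
              mul_le_mul_of_nonneg_left (hM t ht) (hb_nonneg t ht.2)
          _ = M * b t := by ring
    linarith
  -- evaluate ∫ b via antiderivative
  have hB : ∫ t in t₀..T, b t
      = ((-1 / lam - T) - (-ψ t₀ / lam - t₀ + lam * (T - t₀) ^ 2 / 2)) / lam ^ 2 := by
    have hBd : ∀ t : ℝ, HasDerivAt
        (fun t => (-ψ t / lam - t + lam * (T - t) ^ 2 / 2) / lam ^ 2) (b t) t := by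
      intro t
      have h1 : HasDerivAt (fun t : ℝ => T - t) (-1) t := (hasDerivAt_id t).const_sub T
      have h2 : HasDerivAt (fun t : ℝ => lam * (T - t) ^ 2 / 2)
          (lam * (2 * (T - t) * (-1)) / 2) t := by
        have := ((h1.pow 2).const_mul lam).div_const 2
        refine (this).congr_deriv ?_
        push_cast
        ring
      have h3 : HasDerivAt (fun t : ℝ => -ψ t / lam) (-(-lam * ψ t) / lam) t :=
        ((hψd t).neg).div_const lam
      have h4 := ((h3.sub (hasDerivAt_id t)).add h2).div_const (lam ^ 2)
      refine (h4).congr_deriv ?_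
      simp only [hbdef]
      field_simp
      ring
    have := intervalIntegral.integral_eq_sub_of_hasDerivAt (a := t₀) (b := T)
      (fun t _ => hBd t) (hbcont.intervalIntegrable _ _)
    rw [this]
    rw [hψT]
    ring
  -- evaluate the model integral via antiderivative
  have hI : ∫ s in (0:ℝ)..Δt, Real.exp (lam * (Δt - s)) * s ^ 2
      = (-(Real.exp (lam * (Δt - Δt)) * (Δt ^ 2 / lam + 2 * Δt / lam ^ 2 + 2 / lam ^ 3)))
        - (-(Real.exp (lam * (Δt - 0)) * (0 ^ 2 / lam + 2 * 0 / lam ^ 2 + 2 / lam ^ 3))) := by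
    have hΦd : ∀ s : ℝ, HasDerivAt
        (fun s => -(Real.exp (lam * (Δt - s)) * (s ^ 2 / lam + 2 * s / lam ^ 2 + 2 / lam ^ 3)))
        (Real.exp (lam * (Δt - s)) * s ^ 2) s := by
      intro s
      have h1 : HasDerivAt (fun s : ℝ => lam * (Δt - s)) (lam * (-1)) s :=
        ((hasDerivAt_id s).const_sub Δt).const_mul lam
      have h2 : HasDerivAt (fun s : ℝ => Real.exp (lam * (Δt - s)))
          (Real.exp (lam * (Δt - s)) * (lam * (-1))) s := h1.exp
      have h3 : HasDerivAt (fun s : ℝ => s ^ 2 / lam + 2 * s / lam ^ 2 + 2 / lam ^ 3)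
          (2 * s / lam + 2 / lam ^ 2) s := by
        have ha : HasDerivAt (fun s : ℝ => s ^ 2 / lam) (2 * s / lam) s := by
          have := ((hasDerivAt_id s).pow 2).div_const lam
          refine (this).congr_deriv ?_; push_cast; simp only [id_eq]; ring
        have hb2 : HasDerivAt (fun s : ℝ => 2 * s / lam ^ 2) (2 / lam ^ 2) s := by
          have := ((hasDerivAt_id s).const_mul 2).div_const (lam ^ 2)
          refine (this).congr_deriv ?_; ring
        simpa using (ha.add hb2).add_const (2 / lam ^ 3)
      have h4 := (h2.mul h3).neg
      refine (h4).congr_deriv ?_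
      field_simp
      ring
    have hcont2 : Continuous fun s : ℝ => Real.exp (lam * (Δt - s)) * s ^ 2 := by
      continuity
    exact intervalIntegral.integral_eq_sub_of_hasDerivAt
      (fun s _ => hΦd s) (hcont2.intervalIntegrable _ _)
  -- first inequality
  have hineq1 : ‖x T -
      (Real.exp (lam * Δt) • x t₀ + ((Real.exp (lam * Δt) - 1) / lam) • h t₀ +
        ((Real.exp (lam * Δt) - 1 - lam * Δt) / lam ^ 2) • h' t₀)‖
      ≤ M / 2 * ∫ s in (0:ℝ)..Δt, Real.exp (lam * (Δt - s)) * s ^ 2 := by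
    rw [herr]
    refine le_trans hbound ?_
    rw [intervalIntegral.integral_const_mul, hB, hI]
    have hT0 : T - t₀ = Δt := by simp [hTdef]
    rw [hψ0, hT0]
    rw [show Real.exp (lam * (Δt - Δt)) = 1 by norm_num]
    rw [show Real.exp (lam * (Δt - 0)) = Real.exp (lam * Δt) by norm_num]
    simp only [hTdef]
    apply le_of_eq
    field_simp
    ring
  constructor
  · exact hineq1
  · -- second inequality
    have hmono : (∫ s in (0:ℝ)..Δt, Real.exp (lam * (Δt - s)) * s ^ 2)
        ≤ ∫ s in (0:ℝ)..Δt, Real.exp (lam * Δt) * s ^ 2 := by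
      apply intervalIntegral.integral_mono_on (le_of_lt hΔt)
      · exact (Continuous.intervalIntegrable (by continuity) _ _)
      · exact (Continuous.intervalIntegrable (by continuity) _ _)
      · intro s hs
        have : lam * (Δt - s) ≤ lam * Δt := by nlinarith [hs.1]
        exact mul_le_mul_of_nonneg_right (Real.exp_le_exp.mpr this) (sq_nonneg s)
    have hval : (∫ s in (0:ℝ)..Δt, Real.exp (lam * Δt) * s ^ 2)
        = Real.exp (lam * Δt) * (Δt ^ 3 / 3) := by
      rw [intervalIntegral.integral_const_mul, integral_pow]
      norm_num
    calc M / 2 * (∫ s in (0:ℝ)..Δt, Real.exp (lam * (Δt - s)) * s ^ 2)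
        ≤ M / 2 * (Real.exp (lam * Δt) * (Δt ^ 3 / 3)) := by
          apply mul_le_mul_of_nonneg_left _ (by linarith)
          rw [← hval]; exact hmono
      _ = M / 2 * Real.exp (lam * Δt) * Δt ^ 3 / 3 := by ring
end
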